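/- Let A be a finite nonempty subset of ℤ × ℤ, F a field, S = F[z_a : a ∈ A], and ≺ a monomial order on S. Assign to each degree-2 monomial z_a z_{a'} the multidegree a + a' ∈ ℤ × ℤ, and for each c ∈ A + A let σ(c) denote the ≺-minimal degree-2 monic monomial with multidegree c. Let G_1 = {m − m' : m, m' distinct degree-2 monic monomials with equal multidegree}, let C be any subset of A + A, and let H ⊆ S be a set of polynomials such that for every c ∈ C there exists h ∈ H whose leading monomial with respect to ≺ equals σ(c). Then dim_F (S/⟨in_≺(f) : f ∈ G_1 ∪ H⟩)_2 ≤ |(A + A) \ C|. -/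

import Mathlib

set_option maxHeartbeats 1000000
set_option synthInstance.maxHeartbeats 400000


open MvPolynomial Pointwise
open scoped MonomialOrder

/-- The total degree of an exponent vector. -/
def expDeg {A : Finset (ℤ × ℤ)} (d : ↥A →₀ ℕ) : ℕ := d.sum fun _ k => k

/-- The multidegree of an exponent vector indexed by `A ⊆ ℤ × ℤ`. -/
def expMdeg {A : Finset (ℤ × ℤ)} (d : ↥A →₀ ℕ) : ℤ × ℤ := d.sum fun a k => k • (a : ℤ × ℤ)

/-- The leading exponent of a multivariate polynomial with respect to a monomial order. -/
noncomputable def leadExp {σ F : Type*} [CommSemiring F] (m : MonomialOrder σ)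
    (f : MvPolynomial σ F) : σ →₀ ℕ :=
  m.toSyn.symm (f.support.sup fun d => m.toSyn d)

/-- The leading term `in_≺(f)` of a multivariate polynomial with respect to a monomial order. -/
noncomputable def leadTerm {σ F : Type*} [CommSemiring F] (m : MonomialOrder σ)
    (f : MvPolynomial σ F) : MvPolynomial σ F :=
  monomial (leadExp m f) (f.coeff (leadExp m f))

/-- The difference-of-monomials set `G₁`: differences of distinct degree-2 monic monomials
with equal multidegree. -/
def binomSet (A : Finset (ℤ × ℤ)) (F : Type*) [Field F] : Set (MvPolynomial ↥A F) :=
  {f | ∃ d d' : ↥A →₀ ℕ, d ≠ d' ∧ expDeg d = 2 ∧ expDeg d' = 2 ∧ expMdeg d = expMdeg d' ∧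
    f = monomial d 1 - monomial d' 1}

section Aux

variable {A : Finset (ℤ × ℤ)}

lemma expDeg_add (d e : ↥A →₀ ℕ) : expDeg (d + e) = expDeg d + expDeg e :=
  Finsupp.sum_add_index' (fun _ => rfl) (fun _ _ _ => rfl)

lemma expDeg_single (a : ↥A) (k : ℕ) : expDeg (Finsupp.single a k) = k :=
  Finsupp.sum_single_index rfl

lemma expMdeg_add (d e : ↥A →₀ ℕ) : expMdeg (d + e) = expMdeg d + expMdeg e :=
  Finsupp.sum_add_index' (fun a => zero_smul ℕ _) (fun a k l => add_smul k l _)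

lemma expMdeg_single (a : ↥A) (k : ℕ) : expMdeg (Finsupp.single a k) = k • (a : ℤ × ℤ) :=
  Finsupp.sum_single_index (zero_smul ℕ _)

lemma exists_decomp {d : ↥A →₀ ℕ} (h : expDeg d = 2) :
    ∃ a a' : ↥A, d = Finsupp.single a 1 + Finsupp.single a' 1 := by
  classical
  have hc : Multiset.card d.toMultiset = 2 := by
    rw [Finsupp.card_toMultiset]; exact h
  obtain ⟨x, y, hxy⟩ := Multiset.card_eq_two.mp hc
  refine ⟨x, y, ?_⟩
  have := congrArg Multiset.toFinsupp hxy
  rw [Finsupp.toMultiset_toFinsupp] at this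
  rw [this]
  have : ({x, y} : Multiset ↥A) = {x} + {y} := by
    rw [Multiset.singleton_add]; rfl
  rw [this, Multiset.toFinsupp_add, Multiset.toFinsupp_singleton,
    Multiset.toFinsupp_singleton]

lemma mdeg_mem_add {d : ↥A →₀ ℕ} (h : expDeg d = 2) : expMdeg d ∈ A + A := by
  obtain ⟨a, a', rfl⟩ := exists_decomp h
  rw [expMdeg_add, expMdeg_single, expMdeg_single, one_smul, one_smul]
  exact Finset.add_mem_add a.2 a'.2

lemma expDeg_eq_weight (d : ↥A →₀ ℕ) : (Finsupp.weight (1 : ↥A → ℕ)) d = expDeg d := by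
  simp [Finsupp.weight_apply, expDeg, smul_eq_mul, mul_one]

lemma leadExp_mem_support {σ F : Type*} [CommSemiring F] (m : MonomialOrder σ)
    {f : MvPolynomial σ F} (hf : f ≠ 0) : leadExp m f ∈ f.support := by
  obtain ⟨b, hb, hb'⟩ := Finset.exists_mem_eq_sup f.support
    (support_nonempty.mpr hf) (fun d => m.toSyn d)
  rw [leadExp, hb', AddEquiv.symm_apply_apply]; exact hb

lemma leadTerm_binomial {σ F : Type*} [Field F] (m : MonomialOrder σ) {d e : σ →₀ ℕ}
    (h : m.toSyn e < m.toSyn d) :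
    leadTerm m (monomial d (1 : F) - monomial e 1) = monomial d 1 := by
  classical
  have hne : e ≠ d := fun h' => by rw [h'] at h; exact lt_irrefl _ h
  set f := monomial d (1 : F) - monomial e 1 with hf
  have hd : f.coeff d = 1 := by
    simp [hf, coeff_monomial, hne]
  have hsup : f.support ⊆ {d, e} := by
    refine (support_sub _ _ _).trans ?_
    rw [support_monomial, support_monomial, if_neg one_ne_zero, if_neg one_ne_zero]
    intro x hx
    simpa using hx
  have hdsup : d ∈ f.support := mem_support_iff.mpr (by rw [hd]; exact one_ne_zero)
  have hsupeq : f.support.sup (fun x => m.toSyn x) = m.toSyn d := by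
    apply le_antisymm
    · apply Finset.sup_le
      intro b hb
      rcases Finset.mem_insert.mp (hsup hb) with hb' | hb'
      · rw [hb']
      · rw [Finset.mem_singleton.mp hb']; exact le_of_lt h
    · exact Finset.le_sup hdsup
  have hle : leadExp m f = d := by
    rw [leadExp, hsupeq, AddEquiv.symm_apply_apply]
  rw [leadTerm, hle, hd]

end Aux

/-- if `C ⊆ A + A` and `H` is a set of polynomials such that for every `c ∈ C`
some `h ∈ H` has leading monomial `σ(c)`, the `≺`-minimal degree-2 monic monomial of
multidegree `c`, then `dim_F (S/⟨in_≺(G₁ ∪ H)⟩)_2 ≤ |(A + A) \ C|`. -/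
theorem dim_quotient_initial_ideal_le (A : Finset (ℤ × ℤ)) (hA : A.Nonempty)
    (F : Type*) [Field F] (m : MonomialOrder ↥A)
    (C : Finset (ℤ × ℤ)) (hC : C ⊆ A + A) (H : Set (MvPolynomial ↥A F))
    (hH : ∀ c ∈ C, ∃ h ∈ H, expDeg (leadExp m h) = 2 ∧ expMdeg (leadExp m h) = c ∧
      ∀ d : ↥A →₀ ℕ, expDeg d = 2 → expMdeg d = c → leadExp m h ≼[m] d) :
    Module.finrank F
      ((homogeneousSubmodule ↥A F 2).map
        (Ideal.Quotient.mkₐ F (Ideal.span (leadTerm m '' (binomSet A F ∪ H)))).toLinearMap) ≤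
    ((A + A) \ C).card := by
  classical
  set J : Ideal (MvPolynomial ↥A F) :=
    Ideal.span (leadTerm m '' (binomSet A F ∪ H)) with hJ
  set q : MvPolynomial ↥A F →ₗ[F] (MvPolynomial ↥A F ⧸ J) :=
    (Ideal.Quotient.mkₐ F J).toLinearMap with hq
  have hq0 : ∀ x ∈ J, q x = 0 := by
    intro x hx
    simp only [hq, AlgHom.toLinearMap_apply, Ideal.Quotient.mkₐ_eq_mk]
    exact Ideal.Quotient.eq_zero_iff_mem.mpr hx
  -- existence of minimal degree-2 exponent vectors of a given multidegree
  have hmin : ∀ c ∈ A + A, ∃ e : ↥A →₀ ℕ, (expDeg e = 2 ∧ expMdeg e = c) ∧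
      ∀ e' : ↥A →₀ ℕ, expDeg e' = 2 → expMdeg e' = c → m.toSyn e ≤ m.toSyn e' := by
    intro c hc
    obtain ⟨a, ha, a', ha', rfl⟩ := Finset.mem_add.mp hc
    set T : Set m.syn := {x : m.syn |
      expDeg (m.toSyn.symm x) = 2 ∧ expMdeg (m.toSyn.symm x) = a + a'} with hT
    have hTne : T.Nonempty := by
      refine ⟨m.toSyn (Finsupp.single ⟨a, ha⟩ 1 + Finsupp.single ⟨a', ha'⟩ 1), ?_, ?_⟩
      · rw [AddEquiv.symm_apply_apply, expDeg_add, expDeg_single, expDeg_single]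
      · rw [AddEquiv.symm_apply_apply, expMdeg_add, expMdeg_single, expMdeg_single,
          one_smul, one_smul]
    refine ⟨m.toSyn.symm (WellFounded.min wellFounded_lt T hTne),
      WellFounded.min_mem wellFounded_lt T hTne, ?_⟩
    intro e' h1 h2
    have hmem : m.toSyn e' ∈ T := by
      constructor <;> rw [AddEquiv.symm_apply_apply]
      exacts [h1, h2]
    have := WellFounded.not_lt_min wellFounded_lt T hmem
    rw [AddEquiv.apply_symm_apply]
    exact not_lt.mp this
  choose σ0 hσ1 hσ2 using hmin
  -- the spanning finset
  set s : Finset (MvPolynomial ↥A F ⧸ J) := ((A + A) \ C).attach.image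
    (fun c => q (monomial (σ0 c.1 (Finset.mem_sdiff.mp c.2).1) 1)) with hs
  -- leading terms of binomials with larger exponent d lie in J
  have hbinJ : ∀ d e : ↥A →₀ ℕ, expDeg d = 2 → expDeg e = 2 → expMdeg d = expMdeg e →
      m.toSyn e < m.toSyn d → (monomial d (1 : F)) ∈ J := by
    intro d e h1 h2 h3 hlt
    have hne : d ≠ e := by
      intro h'; rw [h'] at hlt; exact lt_irrefl _ hlt
    have hmem : (monomial d (1 : F) - monomial e 1) ∈ binomSet A F :=
      ⟨d, e, hne, h1, h2, h3, rfl⟩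
    have : leadTerm m (monomial d (1 : F) - monomial e 1) ∈
        leadTerm m '' (binomSet A F ∪ H) :=
      Set.mem_image_of_mem _ (Or.inl hmem)
    rw [leadTerm_binomial m hlt] at this
    exact Ideal.subset_span this
  -- key claim: every degree-2 monomial maps into the span of s
  have hkey : ∀ d : ↥A →₀ ℕ, expDeg d = 2 →
      q (monomial d 1) ∈ Submodule.span F (s : Set _) := by
    intro d hd
    have hcmem : expMdeg d ∈ A + A := mdeg_mem_add hd
    by_cases hcC : expMdeg d ∈ C
    · -- case: multidegree in C, the monomial is killed
      obtain ⟨h, hhH, hdeg, hmdeg, hminh⟩ := hH _ hcC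
      have hJmem : (monomial d (1 : F)) ∈ J := by
        by_cases hde : d = leadExp m h
        · -- d equals the leading exponent of h
          have hh0 : h ≠ 0 := by
            intro h0
            rw [h0] at hdeg
            have hz : leadExp m (0 : MvPolynomial ↥A F) = 0 := by
              rw [leadExp]; simp
            rw [hz] at hdeg
            simp [expDeg] at hdeg
          have hco : h.coeff (leadExp m h) ≠ 0 :=
            mem_support_iff.mp (leadExp_mem_support m hh0)
          have hlt : leadTerm m h ∈ J :=
            Ideal.subset_span (Set.mem_image_of_mem _ (Or.inr hhH))
          have hrw : monomial (leadExp m h) (1 : F) =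
              MvPolynomial.C (h.coeff (leadExp m h))⁻¹ * leadTerm m h := by
            rw [leadTerm, C_mul_monomial, inv_mul_cancel₀ hco]
          rw [hde, hrw]
          exact Ideal.mul_mem_left _ _ hlt
        · -- d is strictly larger than the minimal monomial
          have hle := hminh d hd rfl
          have hlt : m.toSyn (leadExp m h) < m.toSyn d :=
            lt_of_le_of_ne hle (fun hsy => hde (m.toSyn.injective hsy).symm)
          exact hbinJ d (leadExp m h) hd hdeg (hmdeg.symm ▸ rfl) hlt
      rw [hq0 _ hJmem]
      exact Submodule.zero_mem _
    · -- case: multidegree not in C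
      set e := σ0 (expMdeg d) hcmem with he
      by_cases hde : d = e
      · -- d is the chosen minimal representative: it is in s
        apply Submodule.subset_span
        have hms : q (monomial d (1 : F)) ∈ s := by
          rw [hs]
          exact Finset.mem_image.mpr ⟨⟨expMdeg d, Finset.mem_sdiff.mpr ⟨hcmem, hcC⟩⟩,
            Finset.mem_attach _ _,
            congrArg (fun x => q (monomial x (1 : F))) hde.symm⟩
        exact Finset.mem_coe.mpr hms
      · -- d is strictly larger than the minimal representative
        obtain ⟨he1, he2⟩ := hσ1 (expMdeg d) hcmem
        have hle := hσ2 (expMdeg d) hcmem d hd rfl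
        have hlt : m.toSyn e < m.toSyn d :=
          lt_of_le_of_ne hle (fun hsy => hde (m.toSyn.injective hsy).symm)
        have hJmem : (monomial d (1 : F)) ∈ J := hbinJ d e hd he1 he2.symm hlt
        rw [hq0 _ hJmem]
        exact Submodule.zero_mem _
  -- the image of the homogeneous component is contained in span of s
  have h1 : (homogeneousSubmodule ↥A F 2).map q ≤ Submodule.span F (s : Set _) := by
    rintro x ⟨p, hp, rfl⟩
    have hph : MvPolynomial.IsHomogeneous p 2 := hp
    rw [show q p = ∑ v ∈ p.support, q (monomial v (p.coeff v)) by
      rw [← map_sum]; exact congrArg q p.as_sum]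
    apply Submodule.sum_mem
    intro v hv
    have hdv : expDeg v = 2 := by
      rw [← expDeg_eq_weight]
      exact hph (mem_support_iff.mp hv)
    have hsm : monomial v (p.coeff v) = (p.coeff v) • monomial v (1 : F) := by
      rw [smul_monomial, smul_eq_mul, mul_one]
    rw [hsm, map_smul]
    exact Submodule.smul_mem _ _ (hkey v hdv)
  -- conclude with a dimension count
  have h2 : Module.finrank F ((homogeneousSubmodule ↥A F 2).map q) ≤
      Module.finrank F (Submodule.span F (s : Set (MvPolynomial ↥A F ⧸ J))) :=
    Submodule.finrank_mono h1
  have h3 : Module.finrank F (Submodule.span F (s : Set (MvPolynomial ↥A F ⧸ J))) ≤ s.card := by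
    have h := finrank_span_le_card (R := F) (s : Set (MvPolynomial ↥A F ⧸ J))
    simpa using h
  have h4 : s.card ≤ ((A + A) \ C).card := by
    refine (Finset.card_image_le).trans ?_
    rw [Finset.card_attach]
  exact le_trans h2 (le_trans h3 h4)
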